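/- Let X, Y, A, B be metric spaces with A, B subsets of a common metric space (Ω,d), let μ be a probability measure on X×A and ν on Y×B, and let π be a coupling of μ and ν. Let L(x,y,x',y') = |d_X(x,x') − d_Y(y,y')|. For α ∈ [0,1], p,q ≥ 1, the fused cost E(π) = ∬ ((1−α)d(a,b)^q + α L(x,y,x',y')^q)^p dπ dπ satisfies E(π)^{1/p} ≥ (1−α)·(∫ d(a,b)^{pq} d(P_{A,B}#π))^{1/p}, where P_{A,B}#π is the pushforward of π onto A×B. In particular, taking infima over couplings, FGW_{α,p,q}(μ,ν) ≥ (1−α)·W_{pq}(μ_A, ν_B)^q, with W_{pq} the (pq)-Wasserstein distance between the feature marginals. -/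

import Mathlib

open MeasureTheory ENNReal Set

noncomputable section

/-- The set of couplings of two probability measures on `X × Ω` and `Y × Ω`. -/
def Couplings {X Y Ω : Type*} [MeasurableSpace X] [MeasurableSpace Y] [MeasurableSpace Ω]
    (μ : Measure (X × Ω)) (ν : Measure (Y × Ω)) : Set (Measure ((X × Ω) × (Y × Ω))) :=
  {π | π.map Prod.fst = μ ∧ π.map Prod.snd = ν}

/-- The fused Gromov-Wasserstein cost of a coupling `π`, with trade-off `α` and
exponents `p, q`. Here `w.1.1, w.2.1` are the structure points `x, y` and
`w.1.2, w.2.2` the feature points `a, b`. -/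
def fgwE {X Y Ω : Type*} [MetricSpace X] [MetricSpace Y] [MetricSpace Ω]
    [MeasurableSpace X] [MeasurableSpace Y] [MeasurableSpace Ω]
    (α p q : ℝ) (π : Measure ((X × Ω) × (Y × Ω))) : ℝ≥0∞ :=
  ∫⁻ w, (∫⁻ w', ENNReal.ofReal
      (((1 - α) * dist w.1.2 w.2.2 ^ q
        + α * |dist w.1.1 w'.1.1 - dist w.2.1 w'.2.1| ^ q) ^ p) ∂π) ∂π

/-- The fused Gromov-Wasserstein distance. -/
def FGW {X Y Ω : Type*} [MetricSpace X] [MetricSpace Y] [MetricSpace Ω]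
    [MeasurableSpace X] [MeasurableSpace Y] [MeasurableSpace Ω]
    (α p q : ℝ) (μ : Measure (X × Ω)) (ν : Measure (Y × Ω)) : ℝ≥0∞ :=
  (⨅ π ∈ Couplings μ ν, fgwE α p q π) ^ (1 / p)

/-- The `r`-Wasserstein distance between two measures on a common metric space `Ω`. -/
def Wass {Ω : Type*} [MetricSpace Ω] [MeasurableSpace Ω]
    (r : ℝ) (μA νB : Measure Ω) : ℝ≥0∞ :=
  (⨅ γ ∈ {γ : Measure (Ω × Ω) | γ.map Prod.fst = μA ∧ γ.map Prod.snd = νB},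
    ∫⁻ z, ENNReal.ofReal (dist z.1 z.2 ^ r) ∂γ) ^ (1 / r)

/-- Core estimate: the fused cost dominates `(1-α)^p` times the `pq`-th moment
of the feature distance. -/
lemma fgwE_core {X Y Ω : Type*} [MetricSpace X] [MetricSpace Y] [MetricSpace Ω]
    [MeasurableSpace X] [BorelSpace X] [MeasurableSpace Y] [BorelSpace Y]
    [MeasurableSpace Ω] [BorelSpace Ω]
    {μ : Measure (X × Ω)} {ν : Measure (Y × Ω)}
    [IsProbabilityMeasure μ]
    (α p q : ℝ) (hα : α ∈ Set.Icc (0 : ℝ) 1) (hp : 1 ≤ p) (hq : 1 ≤ q)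
    (π : Measure ((X × Ω) × (Y × Ω))) (hπ : π ∈ Couplings μ ν) :
    ENNReal.ofReal ((1 - α) ^ p) *
      ∫⁻ w, ENNReal.ofReal (dist w.1.2 w.2.2 ^ (p * q)) ∂π ≤ fgwE α p q π := by
  have h1α : (0:ℝ) ≤ 1 - α := by linarith [hα.2]
  have hp0 : (0:ℝ) ≤ p := by linarith
  have hProb : IsProbabilityMeasure π := by
    constructor
    have h := Measure.map_apply (measurable_fst (α := (X × Ω)) (β := (Y × Ω)))
      (MeasurableSet.univ) (μ := π)
    rw [hπ.1] at h
    simpa using h.symm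
  -- pointwise bound on the inner integrand
  have key : ∀ w w' : (X × Ω) × (Y × Ω),
      (1 - α) ^ p * dist w.1.2 w.2.2 ^ (p * q)
        ≤ ((1 - α) * dist w.1.2 w.2.2 ^ q
            + α * |dist w.1.1 w'.1.1 - dist w.2.1 w'.2.1| ^ q) ^ p := by
    intro w w'
    have hd : (0:ℝ) ≤ dist w.1.2 w.2.2 := dist_nonneg
    have hdq : (0:ℝ) ≤ dist w.1.2 w.2.2 ^ q := Real.rpow_nonneg hd q
    have h2 : (0:ℝ) ≤ α * |dist w.1.1 w'.1.1 - dist w.2.1 w'.2.1| ^ q :=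
      mul_nonneg hα.1 (Real.rpow_nonneg (abs_nonneg _) q)
    have hle : (1 - α) * dist w.1.2 w.2.2 ^ q
        ≤ (1 - α) * dist w.1.2 w.2.2 ^ q
            + α * |dist w.1.1 w'.1.1 - dist w.2.1 w'.2.1| ^ q := by linarith
    calc (1 - α) ^ p * dist w.1.2 w.2.2 ^ (p * q)
        = ((1 - α) * dist w.1.2 w.2.2 ^ q) ^ p := by
          rw [Real.mul_rpow h1α hdq, mul_comm p q, Real.rpow_mul hd]
      _ ≤ _ := Real.rpow_le_rpow (mul_nonneg h1α hdq) hle hp0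
  have inner : ∀ w : (X × Ω) × (Y × Ω),
      ENNReal.ofReal ((1 - α) ^ p * dist w.1.2 w.2.2 ^ (p * q))
        ≤ ∫⁻ w', ENNReal.ofReal
            (((1 - α) * dist w.1.2 w.2.2 ^ q
              + α * |dist w.1.1 w'.1.1 - dist w.2.1 w'.2.1| ^ q) ^ p) ∂π := by
    intro w
    calc ENNReal.ofReal ((1 - α) ^ p * dist w.1.2 w.2.2 ^ (p * q))
        = ∫⁻ _, ENNReal.ofReal ((1 - α) ^ p * dist w.1.2 w.2.2 ^ (p * q)) ∂π := by
          simp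
      _ ≤ _ := lintegral_mono fun w' => ENNReal.ofReal_le_ofReal (key w w')
  calc ENNReal.ofReal ((1 - α) ^ p) *
        ∫⁻ w, ENNReal.ofReal (dist w.1.2 w.2.2 ^ (p * q)) ∂π
      = ∫⁻ w, ENNReal.ofReal ((1 - α) ^ p * dist w.1.2 w.2.2 ^ (p * q)) ∂π := by
        rw [← lintegral_const_mul' _ _ ENNReal.ofReal_ne_top]
        congr 1; funext w
        rw [ENNReal.ofReal_mul (Real.rpow_nonneg h1α p)]
    _ ≤ fgwE α p q π := lintegral_mono inner

theorem stmt4 {X Y Ω : Type*} [MetricSpace X] [MetricSpace Y] [MetricSpace Ω]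
    [CompactSpace X] [CompactSpace Y]
    [MeasurableSpace X] [BorelSpace X] [MeasurableSpace Y] [BorelSpace Y]
    [MeasurableSpace Ω] [BorelSpace Ω]
    (μ : Measure (X × Ω)) (ν : Measure (Y × Ω))
    [IsProbabilityMeasure μ] [IsProbabilityMeasure ν]
    (α p q : ℝ) (hα : α ∈ Set.Icc (0 : ℝ) 1) (hp : 1 ≤ p) (hq : 1 ≤ q) :
    (∀ π ∈ Couplings μ ν,
      ENNReal.ofReal (1 - α) *
        (∫⁻ z, ENNReal.ofReal (dist z.1 z.2 ^ (p * q))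
          ∂(π.map (fun w => (w.1.2, w.2.2)))) ^ (1 / p)
        ≤ (fgwE α p q π) ^ (1 / p)) ∧
    ENNReal.ofReal (1 - α) * (Wass (p * q) (μ.map Prod.snd) (ν.map Prod.snd)) ^ q
      ≤ FGW α p q μ ν := by
  have h1α : (0:ℝ) ≤ 1 - α := by linarith [hα.2]
  have hp0 : (0:ℝ) < p := by linarith
  have hq0 : (0:ℝ) < q := by linarith
  have hf : Measurable fun (w : (X × Ω) × (Y × Ω)) => (w.1.2, w.2.2) :=
    (measurable_fst.snd.prodMk measurable_snd.snd)
  -- bound the pushforward integral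
  have hmap : ∀ π : Measure ((X × Ω) × (Y × Ω)),
      (∫⁻ z, ENNReal.ofReal (dist z.1 z.2 ^ (p * q))
          ∂(π.map (fun w => (w.1.2, w.2.2))))
        ≤ ∫⁻ w, ENNReal.ofReal (dist w.1.2 w.2.2 ^ (p * q)) ∂π := fun π =>
    lintegral_map_le _ _
  have hofReal : ENNReal.ofReal ((1 - α) ^ p) = ENNReal.ofReal (1 - α) ^ p :=
    (ENNReal.ofReal_rpow_of_nonneg h1α hp0.le).symm
  -- Part 1
  have part1 : ∀ π ∈ Couplings μ ν,
      ENNReal.ofReal (1 - α) *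
        (∫⁻ z, ENNReal.ofReal (dist z.1 z.2 ^ (p * q))
          ∂(π.map (fun w => (w.1.2, w.2.2)))) ^ (1 / p)
        ≤ (fgwE α p q π) ^ (1 / p) := by
    intro π hπ
    have core := fgwE_core α p q hα hp hq π hπ
    calc ENNReal.ofReal (1 - α) *
          (∫⁻ z, ENNReal.ofReal (dist z.1 z.2 ^ (p * q))
            ∂(π.map (fun w => (w.1.2, w.2.2)))) ^ (1 / p)
        ≤ ENNReal.ofReal (1 - α) *
          (∫⁻ w, ENNReal.ofReal (dist w.1.2 w.2.2 ^ (p * q)) ∂π) ^ (1 / p) :=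
          mul_le_mul_right (ENNReal.rpow_le_rpow (hmap π) (by positivity)) _
      _ = (ENNReal.ofReal ((1 - α) ^ p) *
            ∫⁻ w, ENNReal.ofReal (dist w.1.2 w.2.2 ^ (p * q)) ∂π) ^ (1 / p) := by
          rw [ENNReal.mul_rpow_of_nonneg _ _ (by positivity : (0:ℝ) ≤ 1/p), hofReal,
            ← ENNReal.rpow_mul, mul_one_div, div_self hp0.ne', ENNReal.rpow_one]
      _ ≤ (fgwE α p q π) ^ (1 / p) :=
          ENNReal.rpow_le_rpow core (by positivity)
  refine ⟨part1, ?_⟩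
  -- Part 2
  set c := ENNReal.ofReal (1 - α) * (Wass (p * q) (μ.map Prod.snd) (ν.map Prod.snd)) ^ q
    with hc
  have hWq : (Wass (p * q) (μ.map Prod.snd) (ν.map Prod.snd)) ^ q
      = (⨅ γ ∈ {γ : Measure (Ω × Ω) | γ.map Prod.fst = μ.map Prod.snd
          ∧ γ.map Prod.snd = ν.map Prod.snd},
          ∫⁻ z, ENNReal.ofReal (dist z.1 z.2 ^ (p * q)) ∂γ) ^ (1 / p) := by
    rw [Wass, ← ENNReal.rpow_mul]
    congr 1
    rw [one_div]
    field_simp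
  have hcp : ∀ π ∈ Couplings μ ν, c ^ p ≤ fgwE α p q π := by
    intro π hπ
    have core := fgwE_core α p q hα hp hq π hπ
    -- the pushforward of π is a coupling of the feature marginals
    have hγ : (π.map fun w => (w.1.2, w.2.2)) ∈
        {γ : Measure (Ω × Ω) | γ.map Prod.fst = μ.map Prod.snd
          ∧ γ.map Prod.snd = ν.map Prod.snd} := by
      constructor
      · rw [Measure.map_map measurable_fst hf, ← hπ.1,
          Measure.map_map measurable_snd measurable_fst]
        rfl
      · rw [Measure.map_map measurable_snd hf, ← hπ.2,
          Measure.map_map measurable_snd measurable_snd]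
        rfl
    have hinf : (⨅ γ ∈ {γ : Measure (Ω × Ω) | γ.map Prod.fst = μ.map Prod.snd
          ∧ γ.map Prod.snd = ν.map Prod.snd},
          ∫⁻ z, ENNReal.ofReal (dist z.1 z.2 ^ (p * q)) ∂γ)
        ≤ ∫⁻ w, ENNReal.ofReal (dist w.1.2 w.2.2 ^ (p * q)) ∂π :=
      (biInf_le _ hγ).trans (hmap π)
    calc c ^ p
        = ENNReal.ofReal ((1 - α) ^ p) *
            ((⨅ γ ∈ {γ : Measure (Ω × Ω) | γ.map Prod.fst = μ.map Prod.snd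
              ∧ γ.map Prod.snd = ν.map Prod.snd},
              ∫⁻ z, ENNReal.ofReal (dist z.1 z.2 ^ (p * q)) ∂γ)) := by
          rw [hc, hWq, ENNReal.mul_rpow_of_nonneg _ _ hp0.le, hofReal,
            ← ENNReal.rpow_mul, one_div, inv_mul_cancel₀ hp0.ne', ENNReal.rpow_one]
      _ ≤ ENNReal.ofReal ((1 - α) ^ p) *
            ∫⁻ w, ENNReal.ofReal (dist w.1.2 w.2.2 ^ (p * q)) ∂π :=
          mul_le_mul_right hinf _
      _ ≤ fgwE α p q π := core
  have : c ^ p ≤ ⨅ π ∈ Couplings μ ν, fgwE α p q π := le_iInf₂ hcp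
  calc c = (c ^ p) ^ (1 / p) := by
        rw [← ENNReal.rpow_mul, mul_one_div, div_self hp0.ne', ENNReal.rpow_one]
    _ ≤ FGW α p q μ ν := ENNReal.rpow_le_rpow this (by positivity)

end
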